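/- Let a > 0 and y ∈ ℝ. For t > e and B > 0 define J(t,B) = ∫_0^∞ 1_{|x − a·t| > B·√t} · ( x + y + (3/(2√2))·log t ) · exp( −√2·( x + y + (3/(2√2))·log t ) − ( x + y + (3/(2√2))·log t )²/(2t) + 3·( x + y + (3/(2√2))·log t )·(log t)/(2√2·t) + (√2+a)·x − a²·t/2 ) dx. Then for every ε > 0 there exists B > 0 such that limsup_{t→∞} J(t,B) ≤ ε. -/

import Mathlib

open MeasureTheory Filter

/-- The first-moment integral of Proposition 7.3 of the paper, localising the relevant
Poisson points of the auxiliary process in a `√t`-neighbourhood of `a·t`. -/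
noncomputable def localisationIntegral (a y t B : ℝ) : ℝ :=
  ∫ x in Set.Ioi (0:ℝ),
    Set.indicator {x : ℝ | |x - a * t| > B * Real.sqrt t}
      (fun x =>
        (x + y + (3 / (2 * Real.sqrt 2)) * Real.log t) *
          Real.exp (-(Real.sqrt 2 * (x + y + (3 / (2 * Real.sqrt 2)) * Real.log t))
            - (x + y + (3 / (2 * Real.sqrt 2)) * Real.log t) ^ 2 / (2 * t)
            + 3 * (x + y + (3 / (2 * Real.sqrt 2)) * Real.log t) * Real.log t /
              (2 * Real.sqrt 2 * t)
            + (Real.sqrt 2 + a) * x - a ^ 2 * t / 2)) x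

namespace Stmt6Aux

open Set Real Topology

/-- The key algebraic identity for the exponent (completion of the square). -/
lemma exponent_eq (a y L t x s : ℝ) (hs : s ≠ 0) (ht : t ≠ 0) :
    -(s * (x + y + (3 / (2 * s)) * L)) - (x + y + (3 / (2 * s)) * L) ^ 2 / (2 * t)
      + 3 * (x + y + (3 / (2 * s)) * L) * L / (2 * s * t) + (s + a) * x - a ^ 2 * t / 2
    = -((x - (a * t - y)) ^ 2 / (2 * t))
      + (-(3 / 2) * L + (3 / (2 * s)) ^ 2 * L ^ 2 / (2 * t) - (s + a) * y) := by
  field_simp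
  ring

lemma helper2 (a c L B st : ℝ) (hst : st ≠ 0) (hB : B ≠ 0) :
    1 / (st ^ 2 * st) * (2 * st ^ 2) * (1 + (a * st ^ 2 + c * L) / (B * st / 2))
      = 2 / st + 4 * a / B + 4 * c * L / (B * st ^ 2) := by
  field_simp
  ring


lemma gauss_deriv (t q x : ℝ) (ht : 0 < t) :
    HasDerivAt (fun x => -t * Real.exp (-((x - q) ^ 2 / (2 * t))))
      ((x - q) * Real.exp (-((x - q) ^ 2 / (2 * t)))) x := by
  have h1 : HasDerivAt (fun x : ℝ => -((x - q) ^ 2 / (2 * t)))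
      (-(2 * (x - q) ^ 1 * 1 / (2 * t))) x := by
    exact (((hasDerivAt_id x).sub_const q).pow 2).div_const (2 * t) |>.neg
  have h2 := (h1.exp).const_mul (-t)
  refine h2.congr_deriv ?_
  field_simp

lemma gauss_tendsto (t q : ℝ) (ht : 0 < t) :
    Tendsto (fun x => -t * Real.exp (-((x - q) ^ 2 / (2 * t)))) atTop (𝓝 0) := by
  have h1 : Tendsto (fun x : ℝ => (x - q) ^ 2 / (2 * t)) atTop atTop := by
    apply Tendsto.atTop_div_const (by positivity)
    exact (tendsto_pow_atTop two_ne_zero).comp (tendsto_atTop_add_const_right _ (-q) tendsto_id)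
  have h2 := (Real.tendsto_exp_neg_atTop_nhds_zero.comp h1).const_mul (-t)
  simpa using h2

lemma gauss_nonneg (t q p : ℝ) (hq : q ≤ p) :
    ∀ x ∈ Set.Ioi p, 0 ≤ (x - q) * Real.exp (-((x - q) ^ 2 / (2 * t))) := by
  intro x hx
  have hx' : p < x := hx
  have : 0 ≤ x - q := by linarith
  positivity

lemma tail_integral (t q p : ℝ) (ht : 0 < t) (hq : q ≤ p) :
    ∫ x in Set.Ioi p, (x - q) * Real.exp (-((x - q) ^ 2 / (2 * t)))
      = t * Real.exp (-((p - q) ^ 2 / (2 * t))) := by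
  have := integral_Ioi_of_hasDerivAt_of_nonneg'
    (g := fun x => -t * Real.exp (-((x - q) ^ 2 / (2 * t))))
    (g' := fun x => (x - q) * Real.exp (-((x - q) ^ 2 / (2 * t)))) (a := p) (l := 0)
    (fun x _ => gauss_deriv t q x ht) (gauss_nonneg t q p hq) (gauss_tendsto t q ht)
  rw [this]; ring

lemma tail_integrable (t q p : ℝ) (ht : 0 < t) (hq : q ≤ p) :
    IntegrableOn (fun x => (x - q) * Real.exp (-((x - q) ^ 2 / (2 * t)))) (Set.Ioi p) :=
  integrableOn_Ioi_deriv_of_nonneg' (fun x _ => gauss_deriv t q x ht)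
    (gauss_nonneg t q p hq) (gauss_tendsto t q ht)

lemma gauss_deriv' (t q x : ℝ) (ht : 0 < t) :
    HasDerivAt (fun x => t * Real.exp (-((x - q) ^ 2 / (2 * t))))
      ((q - x) * Real.exp (-((x - q) ^ 2 / (2 * t)))) x := by
  have h := (gauss_deriv t q x ht).neg
  have e : (fun x => t * Real.exp (-((x - q) ^ 2 / (2 * t))))
      = -fun x => -t * Real.exp (-((x - q) ^ 2 / (2 * t))) := by
    ext x; simp only [Pi.neg_apply]; ring
  rw [e]
  refine h.congr_deriv ?_
  ring

lemma lower_integral (t q p : ℝ) (ht : 0 < t) (hp : 0 ≤ p) :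
    ∫ x in Set.Ioc (0:ℝ) p, (q - x) * Real.exp (-((x - q) ^ 2 / (2 * t)))
      ≤ t * Real.exp (-((p - q) ^ 2 / (2 * t))) := by
  have hcont : Continuous (fun x : ℝ => (q - x) * Real.exp (-((x - q) ^ 2 / (2 * t)))) := by
    fun_prop
  have hInt : ∫ x in (0:ℝ)..p, (q - x) * Real.exp (-((x - q) ^ 2 / (2 * t)))
      = t * Real.exp (-((p - q) ^ 2 / (2 * t))) - t * Real.exp (-((0 - q) ^ 2 / (2 * t))) :=
    intervalIntegral.integral_eq_sub_of_hasDerivAt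
      (fun x _ => gauss_deriv' t q x ht) (hcont.intervalIntegrable 0 p)
  rw [← intervalIntegral.integral_of_le hp, hInt]
  have : 0 ≤ t * Real.exp (-((0 - q) ^ 2 / (2 * t))) := by positivity
  linarith


lemma exp_neg_log32 (t : ℝ) (ht0 : 0 < t) :
    Real.exp (-(3/2) * Real.log t) = 1 / (t * Real.sqrt t) := by
  have e1 : Real.exp (Real.log t) = t := Real.exp_log ht0
  have e2 : Real.exp (Real.log t / 2) = Real.sqrt t := by
    have h : Real.exp (Real.log t / 2) ^ 2 = t := by
      rw [← Real.exp_nat_mul, show ((2:ℕ) : ℝ) * (Real.log t / 2) = Real.log t by push_cast; ring, e1]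
    conv_rhs => rw [← h]
    rw [Real.sqrt_sq (Real.exp_pos _).le]
  rw [show -(3/2) * Real.log t = -(Real.log t + Real.log t / 2) by ring,
    Real.exp_neg, Real.exp_add, e1, e2, one_div, mul_inv]

set_option maxHeartbeats 1000000 in
lemma main_bound (a y B : ℝ) (ha : 0 < a) (hB : 1 ≤ B) :
    ∀ᶠ t in atTop, |localisationIntegral a y t B| ≤
      2 * (2 + 4 * a) * Real.exp (-(Real.sqrt 2 + a) * y) * Real.exp (-B ^ 2 / 8) := by
  have hBpos : (0:ℝ) < B := lt_of_lt_of_le one_pos hB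
  have hs0 : (0:ℝ) < Real.sqrt 2 := Real.sqrt_pos.mpr two_pos
  set c : ℝ := 3 / (2 * Real.sqrt 2) with hc_def
  have hc0 : 0 < c := by positivity
  -- eventual hypotheses
  have E3 : ∀ᶠ t : ℝ in atTop, c ^ 2 * Real.log t ^ 2 / (2 * t) ≤ Real.log 2 := by
    have T : Tendsto (fun t : ℝ => c ^ 2 * Real.log t ^ 2 / (2 * t)) atTop (𝓝 0) := by
      have T2 := (Real.tendsto_pow_log_div_mul_add_atTop 1 0 2 one_ne_zero).const_mul (c ^ 2 / 2)
      simp only [mul_zero] at T2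
      refine T2.congr fun t => by ring
    exact (T.eventually_lt_const (Real.log_pos (by norm_num))).mono fun t h => h.le
  have E4 : ∀ᶠ t : ℝ in atTop, 4 * c * Real.log t / (B * t) ≤ 1 := by
    have T : Tendsto (fun t : ℝ => 4 * c * Real.log t / (B * t)) atTop (𝓝 0) := by
      have T2 := (Real.tendsto_pow_log_div_mul_add_atTop 1 0 1 one_ne_zero).const_mul (4 * c / B)
      simp only [mul_zero] at T2
      refine T2.congr fun t => by simp only [pow_one]; ring
    exact (T.eventually_lt_const one_pos).mono fun t h => h.le
  filter_upwards [eventually_ge_atTop (1:ℝ), eventually_ge_atTop (4:ℝ),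
    eventually_ge_atTop ((2 * |y| / B) ^ 2), eventually_ge_atTop ((B / a) ^ 2),
    eventually_gt_atTop (2 * y / a), E3, E4]
    with t h1 h2 h5 h6 h7 h3 h4
  -- basic facts
  have ht0 : (0:ℝ) < t := lt_of_lt_of_le one_pos h1
  have hL0 : 0 ≤ Real.log t := Real.log_nonneg h1
  have hst0 : 0 < Real.sqrt t := Real.sqrt_pos.mpr ht0
  have hst2 : Real.sqrt t ^ 2 = t := Real.sq_sqrt ht0.le
  have sqrt_ge : ∀ K : ℝ, 0 ≤ K → K ^ 2 ≤ t → K ≤ Real.sqrt t := by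
    intro K hK h
    have := Real.sqrt_le_sqrt h
    rwa [Real.sqrt_sq hK] at this
  have hst4 : 2 ≤ Real.sqrt t := sqrt_ge 2 (by norm_num) (by nlinarith)
  have hyB : |y| ≤ B * Real.sqrt t / 2 := by
    have h := sqrt_ge _ (by positivity) h5
    rw [div_le_iff₀ hBpos] at h
    nlinarith
  have hBa : B ≤ a * Real.sqrt t := by
    have h := sqrt_ge _ (by positivity) h6
    rw [div_le_iff₀ ha] at h
    nlinarith
  have hy2 : y < a * t / 2 := by
    rw [div_lt_iff₀ ha] at h7
    linarith
  -- abbreviations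
  set L : ℝ := Real.log t with hL_def
  set q : ℝ := a * t - y with hq_def
  set r : ℝ := B * Real.sqrt t / 2 with hr_def
  set M : ℝ := a * t + c * L with hM_def
  have hr0 : 0 < r := by rw [hr_def]; positivity
  have hrt : B * Real.sqrt t / 2 ≤ a * t / 2 := by
    have := mul_le_mul_of_nonneg_right hBa hst0.le
    nlinarith
  have hqr : 0 < q - r := by rw [hq_def, hr_def]; linarith
  have hM0 : 0 ≤ M := by rw [hM_def]; positivity
  set g : ℝ := -(3 / 2) * L + (3 / (2 * Real.sqrt 2)) ^ 2 * L ^ 2 / (2 * t)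
    - (Real.sqrt 2 + a) * y with hg_def
  set D : ℝ := Real.exp g * (1 + M / r) with hD_def
  have hMr : 0 ≤ M / r := div_nonneg hM0 hr0.le
  have hD0 : 0 ≤ D := by
    rw [hD_def]
    have : (0:ℝ) ≤ 1 + M / r := by linarith
    positivity
  set F : ℝ → ℝ := fun x => (x - q) * Real.exp (-((x - q) ^ 2 / (2 * t))) with hF_def
  set G : ℝ → ℝ := fun x => (q - x) * Real.exp (-((x - q) ^ 2 / (2 * t))) with hG_def
  have hF0 : ∀ x, 0 ≤ Set.indicator (Set.Ioi (q + r)) F x :=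
    fun x => Set.indicator_nonneg (fun x hx => gauss_nonneg t q (q + r) (by linarith) x hx) x
  have hG0 : ∀ x, 0 ≤ Set.indicator (Set.Ioc 0 (q - r)) G x := by
    refine fun x => Set.indicator_nonneg (fun x hx => ?_) x
    have hx2 : x ≤ q - r := hx.2
    have : 0 ≤ q - x := by linarith
    rw [hG_def]
    positivity
  -- the pointwise bound
  have key : ∀ x ∈ Set.Ioi (0:ℝ),
      ‖Set.indicator {x : ℝ | |x - a * t| > B * Real.sqrt t}
        (fun x =>
          (x + y + (3 / (2 * Real.sqrt 2)) * Real.log t) *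
            Real.exp (-(Real.sqrt 2 * (x + y + (3 / (2 * Real.sqrt 2)) * Real.log t))
              - (x + y + (3 / (2 * Real.sqrt 2)) * Real.log t) ^ 2 / (2 * t)
              + 3 * (x + y + (3 / (2 * Real.sqrt 2)) * Real.log t) * Real.log t /
                (2 * Real.sqrt 2 * t)
              + (Real.sqrt 2 + a) * x - a ^ 2 * t / 2)) x‖
      ≤ D * (Set.indicator (Set.Ioi (q + r)) F x + Set.indicator (Set.Ioc 0 (q - r)) G x) := by
    intro x hx
    have hφ0 : 0 ≤ D * (Set.indicator (Set.Ioi (q + r)) F x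
        + Set.indicator (Set.Ioc 0 (q - r)) G x) :=
      mul_nonneg hD0 (add_nonneg (hF0 x) (hG0 x))
    by_cases hmem : x ∈ {x : ℝ | |x - a * t| > B * Real.sqrt t}
    · rw [Set.indicator_of_mem hmem]
      have hE := exponent_eq a y (Real.log t) t x (Real.sqrt 2) hs0.ne' ht0.ne'
      rw [Real.norm_eq_abs, abs_mul, Real.abs_exp, hE, Real.exp_add]
      have hmem' : B * Real.sqrt t < |x - a * t| := hmem
      have habs : |x - a * t| ≤ |x - q| + |y| := by
        calc |x - a * t| = |(x - q) + -y| := by rw [hq_def]; ring_nf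
          _ ≤ |x - q| + |-y| := abs_add_le _ _
          _ = |x - q| + |y| := by rw [abs_neg]
      have hu : r < |x - q| := by
        rw [hr_def] at hyB ⊢
        linarith
      have hz : |x + y + (3 / (2 * Real.sqrt 2)) * Real.log t| ≤ (1 + M / r) * |x - q| := by
        have h1' : x + y + (3 / (2 * Real.sqrt 2)) * Real.log t = (x - q) + M := by
          rw [hM_def, hq_def, hL_def, hc_def]; ring
        have h2' : |(x - q) + M| ≤ |x - q| + M := by
          calc |(x - q) + M| ≤ |x - q| + |M| := abs_add_le _ _
            _ = |x - q| + M := by rw [abs_of_nonneg hM0]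
        have h3' : M ≤ M / r * |x - q| := by
          rw [div_mul_eq_mul_div, le_div_iff₀ hr0]
          exact mul_le_mul_of_nonneg_left hu.le hM0
        rw [h1']
        calc |(x - q) + M| ≤ |x - q| + M := h2'
          _ ≤ |x - q| + M / r * |x - q| := by linarith
          _ = (1 + M / r) * |x - q| := by ring
      have hexp_nonneg : (0:ℝ) ≤ Real.exp (-((x - q) ^ 2 / (2 * t))) * Real.exp g :=
        mul_nonneg (Real.exp_pos _).le (Real.exp_pos _).le
      have hgsplit : -(3 / 2) * Real.log t + (3 / (2 * Real.sqrt 2)) ^ 2 * Real.log t ^ 2 / (2 * t)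
          - (Real.sqrt 2 + a) * y = g := by rw [hg_def, hL_def]
      rw [hgsplit]
      rcases lt_abs.mp hu with hcase | hcase
      · -- x - q > r
        have hxmem : x ∈ Set.Ioi (q + r) := by simp only [Set.mem_Ioi]; linarith
        rw [Set.indicator_of_mem hxmem]
        have habs_u : |x - q| = x - q := abs_of_pos (by linarith)
        have step : |x + y + (3 / (2 * Real.sqrt 2)) * Real.log t| *
            (Real.exp (-((x - q) ^ 2 / (2 * t))) * Real.exp g) ≤ D * F x := by
          calc |x + y + (3 / (2 * Real.sqrt 2)) * Real.log t| *
              (Real.exp (-((x - q) ^ 2 / (2 * t))) * Real.exp g)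
              ≤ ((1 + M / r) * |x - q|) * (Real.exp (-((x - q) ^ 2 / (2 * t))) * Real.exp g) :=
                mul_le_mul_of_nonneg_right hz hexp_nonneg
            _ = D * F x := by rw [habs_u, hD_def, hF_def]; ring
        have : 0 ≤ D * Set.indicator (Set.Ioc 0 (q - r)) G x := mul_nonneg hD0 (hG0 x)
        calc _ ≤ D * F x := step
          _ ≤ D * (F x + Set.indicator (Set.Ioc 0 (q - r)) G x) := by
              rw [mul_add]; linarith [mul_nonneg hD0 (hG0 x)]
      · -- x - q < -r
        have hxlt : x < q - r := by linarith
        have hxmem : x ∈ Set.Ioc (0:ℝ) (q - r) := ⟨hx, hxlt.le⟩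
        rw [Set.indicator_of_mem hxmem]
        have hxnot : x ∉ Set.Ioi (q + r) := by simp only [Set.mem_Ioi]; push_neg; linarith
        rw [Set.indicator_of_notMem hxnot]
        have habs_u : |x - q| = q - x := by rw [abs_of_neg (by linarith : x - q < 0)]; ring
        calc |x + y + (3 / (2 * Real.sqrt 2)) * Real.log t| *
            (Real.exp (-((x - q) ^ 2 / (2 * t))) * Real.exp g)
            ≤ ((1 + M / r) * |x - q|) * (Real.exp (-((x - q) ^ 2 / (2 * t))) * Real.exp g) :=
              mul_le_mul_of_nonneg_right hz hexp_nonneg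
          _ = D * G x := by rw [habs_u, hD_def, hG_def]; ring
          _ = D * (0 + G x) := by ring
    · rw [Set.indicator_of_notMem hmem]
      simpa using hφ0
  -- integrability
  have hIF : IntegrableOn (Set.indicator (Set.Ioi (q + r)) F) (Set.Ioi (0:ℝ)) := by
    rw [hF_def]
    exact ((tail_integrable t q (q + r) ht0 (by linarith)).integrable_indicator
      measurableSet_Ioi).integrableOn
  have hIG : IntegrableOn (Set.indicator (Set.Ioc 0 (q - r)) G) (Set.Ioi (0:ℝ)) := by
    have hGc : Continuous G := by rw [hG_def]; fun_prop
    exact ((hGc.integrableOn_Ioc).integrable_indicator measurableSet_Ioc).integrableOn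
  have hphiint : Integrable (fun x => D * (Set.indicator (Set.Ioi (q + r)) F x
      + Set.indicator (Set.Ioc 0 (q - r)) G x)) (volume.restrict (Set.Ioi (0:ℝ))) :=
    (hIF.add hIG).const_mul D
  have hJ1 : |localisationIntegral a y t B| ≤ ∫ x in Set.Ioi (0:ℝ),
      D * (Set.indicator (Set.Ioi (q + r)) F x + Set.indicator (Set.Ioc 0 (q - r)) G x) := by
    rw [← Real.norm_eq_abs]
    refine (norm_integral_le_integral_norm _).trans ?_
    exact integral_mono_of_nonneg (Eventually.of_forall fun x => norm_nonneg _) hphiint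
      ((ae_restrict_iff' measurableSet_Ioi).mpr (Eventually.of_forall key))
  have hsum : ∫ x in Set.Ioi (0:ℝ),
      D * (Set.indicator (Set.Ioi (q + r)) F x + Set.indicator (Set.Ioc 0 (q - r)) G x)
      = D * ((∫ x in Set.Ioi (0:ℝ), Set.indicator (Set.Ioi (q + r)) F x)
        + ∫ x in Set.Ioi (0:ℝ), Set.indicator (Set.Ioc 0 (q - r)) G x) := by
    rw [MeasureTheory.integral_const_mul D, integral_add hIF hIG]
  have hIF_val : ∫ x in Set.Ioi (0:ℝ), Set.indicator (Set.Ioi (q + r)) F x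
      = t * Real.exp (-(r ^ 2 / (2 * t))) := by
    rw [setIntegral_indicator measurableSet_Ioi, Set.Ioi_inter_Ioi,
      sup_eq_right.mpr (by linarith : (0:ℝ) ≤ q + r), hF_def]
    have h := tail_integral t q (q + r) ht0 (by linarith)
    simpa [show q + r - q = r from by ring] using h
  have hIG_val : (∫ x in Set.Ioi (0:ℝ), Set.indicator (Set.Ioc 0 (q - r)) G x)
      ≤ t * Real.exp (-(r ^ 2 / (2 * t))) := by
    rw [setIntegral_indicator measurableSet_Ioc,
      Set.inter_eq_self_of_subset_right Set.Ioc_subset_Ioi_self, hG_def]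
    have h := lower_integral t q (q - r) ht0 hqr.le
    simpa [show (q - r - q) ^ 2 = r ^ 2 from by ring] using h
  have hphival : (∫ x in Set.Ioi (0:ℝ),
      D * (Set.indicator (Set.Ioi (q + r)) F x + Set.indicator (Set.Ioc 0 (q - r)) G x))
      ≤ D * (2 * t * Real.exp (-(r ^ 2 / (2 * t)))) := by
    rw [hsum, hIF_val]
    exact mul_le_mul_of_nonneg_left (by linarith) hD0
  have hr28 : -(r ^ 2 / (2 * t)) = -B ^ 2 / 8 := by
    rw [hr_def, div_pow, mul_pow, hst2]
    field_simp
    ring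
  -- step C
  have h32' : Real.exp (-(3/2) * L) = 1 / (t * Real.sqrt t) := by
    rw [hL_def]; exact exp_neg_log32 t ht0
  have hid := helper2 a c L B (Real.sqrt t) hst0.ne' hBpos.ne'
  rw [hst2] at hid
  have hfirst_eq : Real.exp (-(3/2) * L) * (2 * t) * (1 + M / r)
      = 2 / Real.sqrt t + 4 * a / B + 4 * c * L / (B * t) := by
    rw [h32', hM_def, hr_def]
    exact hid
  have hfirst_le : Real.exp (-(3/2) * L) * (2 * t) * (1 + M / r) ≤ 2 + 4 * a := by
    rw [hfirst_eq]
    have d1 : 2 / Real.sqrt t ≤ 1 := by rw [div_le_one hst0]; exact hst4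
    have d2 : 4 * a / B ≤ 4 * a := div_le_self (by positivity) hB
    linarith [h4]
  have hfirst_nn : 0 ≤ Real.exp (-(3/2) * L) * (2 * t) * (1 + M / r) := by
    rw [hfirst_eq]; positivity
  have h3' : (3 / (2 * Real.sqrt 2)) ^ 2 * L ^ 2 / (2 * t) ≤ Real.log 2 := by
    rw [← hc_def]; exact h3
  have hsecond : Real.exp ((3 / (2 * Real.sqrt 2)) ^ 2 * L ^ 2 / (2 * t)) ≤ 2 := by
    calc Real.exp ((3 / (2 * Real.sqrt 2)) ^ 2 * L ^ 2 / (2 * t))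
        ≤ Real.exp (Real.log 2) := Real.exp_le_exp.mpr h3'
      _ = 2 := Real.exp_log two_pos
  have hgdecomp : Real.exp g = Real.exp (-(3/2) * L)
      * Real.exp ((3 / (2 * Real.sqrt 2)) ^ 2 * L ^ 2 / (2 * t))
      * Real.exp (-(Real.sqrt 2 + a) * y) := by
    rw [hg_def, ← Real.exp_add, ← Real.exp_add]
    congr 1
    ring
  have hD2t : D * (2 * t) ≤ 2 * (2 + 4 * a) * Real.exp (-(Real.sqrt 2 + a) * y) := by
    have hrw : D * (2 * t) = Real.exp (-(3/2) * L) * (2 * t) * (1 + M / r)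
        * Real.exp ((3 / (2 * Real.sqrt 2)) ^ 2 * L ^ 2 / (2 * t))
        * Real.exp (-(Real.sqrt 2 + a) * y) := by
      rw [hD_def, hgdecomp]; ring
    rw [hrw]
    have e3 : (0:ℝ) < Real.exp (-(Real.sqrt 2 + a) * y) := Real.exp_pos _
    have h12 : Real.exp (-(3/2) * L) * (2 * t) * (1 + M / r)
        * Real.exp ((3 / (2 * Real.sqrt 2)) ^ 2 * L ^ 2 / (2 * t)) ≤ (2 + 4 * a) * 2 :=
      mul_le_mul hfirst_le hsecond (Real.exp_pos _).le (by linarith)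
    calc _ ≤ (2 + 4 * a) * 2 * Real.exp (-(Real.sqrt 2 + a) * y) :=
          mul_le_mul_of_nonneg_right h12 e3.le
      _ = 2 * (2 + 4 * a) * Real.exp (-(Real.sqrt 2 + a) * y) := by ring
  calc |localisationIntegral a y t B|
      ≤ ∫ x in Set.Ioi (0:ℝ), D * (Set.indicator (Set.Ioi (q + r)) F x
        + Set.indicator (Set.Ioc 0 (q - r)) G x) := hJ1
    _ ≤ D * (2 * t * Real.exp (-(r ^ 2 / (2 * t)))) := hphival
    _ = D * (2 * t) * Real.exp (-B ^ 2 / 8) := by rw [← hr28]; ring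
    _ ≤ 2 * (2 + 4 * a) * Real.exp (-(Real.sqrt 2 + a) * y) * Real.exp (-B ^ 2 / 8) :=
        mul_le_mul_of_nonneg_right hD2t (Real.exp_pos _).le

end Stmt6Aux

/-- the real-analysis content of Proposition 7.3 of the paper. -/
theorem stmt_6 (a y : ℝ) (ha : 0 < a) :
    ∀ ε > (0:ℝ), ∃ B > (0:ℝ),
      Filter.limsup (fun t : ℝ => localisationIntegral a y t B) atTop ≤ ε := by
  intro ε hε
  have hC0 : (0:ℝ) < 2 * (2 + 4 * a) * Real.exp (-(Real.sqrt 2 + a) * y) := by positivity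
  have hT : Filter.Tendsto
      (fun B : ℝ => 2 * (2 + 4 * a) * Real.exp (-(Real.sqrt 2 + a) * y) * Real.exp (-B ^ 2 / 8))
      atTop (nhds 0) := by
    have h1 : Filter.Tendsto (fun B : ℝ => B ^ 2 / 8) atTop atTop :=
      (tendsto_pow_atTop two_ne_zero).atTop_div_const (by norm_num)
    have h2 := (Real.tendsto_exp_neg_atTop_nhds_zero.comp h1).const_mul
      (2 * (2 + 4 * a) * Real.exp (-(Real.sqrt 2 + a) * y))
    simp only [mul_zero] at h2
    refine h2.congr fun B => ?_
    simp only [Function.comp]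
    rw [neg_div]
  obtain ⟨B, hBε, hB1⟩ := ((hT.eventually_lt_const hε).and (eventually_ge_atTop (1:ℝ))).exists
  refine ⟨B, by linarith, ?_⟩
  have hbound := Stmt6Aux.main_bound a y B ha hB1
  apply Filter.limsup_le_of_le
  · refine Filter.isCoboundedUnder_le_of_eventually_le atTop
      (x := -(2 * (2 + 4 * a) * Real.exp (-(Real.sqrt 2 + a) * y) * Real.exp (-B ^ 2 / 8))) ?_
    filter_upwards [hbound] with t ht
    linarith [(abs_le.mp ht).1]
  · filter_upwards [hbound] with t ht
    linarith [(abs_le.mp ht).2]
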